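/- Property [A] holds for the Frail Fighter: for u = 0 and every fixed n ≥ 1, the function t ↦ K(n,t) is non-increasing on [0,∞). -/

import Mathlib

open Real MeasureTheory Filter Topology

/-- Auxiliary history-based recursion: `Nhist a u n m t` equals `N(m,t)` when `m ≤ n`. -/
noncomputable def Nhist (a : ℕ → ℝ) (u : ℝ) : ℕ → ℕ → ℝ → ℝ
  | 0, _, _ => 0
  | n + 1, m, t =>
      if m ≤ n then Nhist a u n m t
      else (Finset.Icc 1 (n + 1)).sup'
          (Finset.nonempty_Icc.mpr (Nat.succ_le_succ (Nat.zero_le n)))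
          (fun j => a j + (a j * (1 - u) + u) *
            (Real.exp (-t) * ∫ x in (0:ℝ)..t, Nhist a u n (n + 1 - j) x * Real.exp x))

/-- `Nval a u n t` is `N(n,t)`, the optimal expected number of enemy planes shot down,
with `N(0,t) = 0` and `N(n,t) = max_{1 ≤ j ≤ n} N_n(j,t)`. -/
noncomputable def Nval (a : ℕ → ℝ) (u : ℝ) (n : ℕ) (t : ℝ) : ℝ :=
  Nhist a u n n t

/-- `Nstar a u r t` is `N*(r,t) = e^{-t} ∫_0^t N(r,x) e^x dx` (so `N*(0,t) = 0`). -/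
noncomputable def Nstar (a : ℕ → ℝ) (u : ℝ) (r : ℕ) (t : ℝ) : ℝ :=
  Real.exp (-t) * ∫ x in (0:ℝ)..t, Nval a u r x * Real.exp x

/-- `Nalloc a u n j t` is `N_n(j,t) = a(j) + c(j)·N*(n-j,t)` where `c(j) = a(j)(1-u)+u`. -/
noncomputable def Nalloc (a : ℕ → ℝ) (u : ℝ) (n j : ℕ) (t : ℝ) : ℝ :=
  a j + (a j * (1 - u) + u) * Nstar a u (n - j) t

/-- `Kopt a u n t = min { j ∈ {1,…,n} : N_n(j,t) = N(n,t) }`. -/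
noncomputable def Kopt (a : ℕ → ℝ) (u : ℝ) (n : ℕ) (t : ℝ) : ℕ :=
  sInf {j : ℕ | 1 ≤ j ∧ j ≤ n ∧ Nalloc a u n j t = Nval a u n t}

namespace Frail

lemma icc_ne (n : ℕ) : (Finset.Icc 1 (n+1)).Nonempty :=
  Finset.nonempty_Icc.mpr (Nat.succ_le_succ (Nat.zero_le n))

lemma nhist_eq (a : ℕ → ℝ) (u : ℝ) :
    ∀ n m, m ≤ n → ∀ t, Nhist a u n m t = Nval a u m t := by
  intro n
  induction n with
  | zero => intro m hm t; interval_cases m; rfl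
  | succ n ih =>
    intro m hm t
    rcases Nat.lt_or_ge m (n+1) with h | h
    · have h' : m ≤ n := Nat.lt_succ_iff.mp h
      show Nhist a u (n+1) m t = _
      rw [Nhist, if_pos h', ih m h' t]
    · have : m = n + 1 := le_antisymm hm h
      subst this; rfl

lemma nval_succ (a : ℕ → ℝ) (u : ℝ) (n : ℕ) (t : ℝ) :
    Nval a u (n+1) t = (Finset.Icc 1 (n+1)).sup' (icc_ne n)
      (fun j => Nalloc a u (n+1) j t) := by
  show Nhist a u (n+1) (n+1) t = _
  rw [Nhist, if_neg (by omega)]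
  apply Finset.sup'_congr _ rfl
  intro j hj
  simp only [Finset.mem_Icc] at hj
  have : ∀ x : ℝ, Nhist a u n (n + 1 - j) x * Real.exp x
      = Nval a u (n + 1 - j) x * Real.exp x := by
    intro x
    rw [nhist_eq a u n (n+1-j) (by omega) x]
  rw [intervalIntegral.integral_congr (fun x _ => this x)]
  rfl

lemma nval_zero (a : ℕ → ℝ) (u : ℝ) (t : ℝ) : Nval a u 0 t = 0 := rfl

/-- `w r t = 1 + N*(r,t)` -/
noncomputable def w (a : ℕ → ℝ) (r : ℕ) (t : ℝ) : ℝ := 1 + Nstar a 0 r t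

/-- `V m t = 1 + N(m,t)` -/
noncomputable def V (a : ℕ → ℝ) (m : ℕ) (t : ℝ) : ℝ := 1 + Nval a 0 m t

lemma nalloc_frail (a : ℕ → ℝ) (n j : ℕ) (t : ℝ) :
    Nalloc a 0 n j t = a j * w a (n - j) t := by
  simp only [Nalloc, w]; ring

lemma V_succ (a : ℕ → ℝ) (n : ℕ) (t : ℝ) :
    V a (n+1) t = 1 + (Finset.Icc 1 (n+1)).sup' (icc_ne n)
      (fun j => a j * w a (n+1-j) t) := by
  rw [V, nval_succ]
  congr 1
  exact Finset.sup'_congr _ rfl (fun j _ => nalloc_frail a (n+1) j t)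

lemma V_zero (a : ℕ → ℝ) (t : ℝ) : V a 0 t = 1 := by simp [V, nval_zero]
lemma cont_sup' {ι : Type*} {s : Finset ι} (H : s.Nonempty) (f : ι → ℝ → ℝ)
    (hf : ∀ i ∈ s, Continuous (f i)) :
    Continuous (fun t => s.sup' H fun i => f i t) := by
  induction H using Finset.Nonempty.cons_induction with
  | singleton a => simpa using hf a (by simp)
  | cons a s ha hs ih =>
    have : (fun t => (Finset.cons a s ha).sup' (Finset.cons_nonempty ha) fun i => f i t)
        = fun t => max (f a t) (s.sup' hs fun i => f i t) := by
      funext t; rw [Finset.sup'_cons]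
    rw [this]
    exact ((hf a (by simp)).max (ih (fun i hi => hf i (Finset.mem_cons_of_mem hi))))

variable {a : ℕ → ℝ}

lemma Nstar_cont (a : ℕ → ℝ) (r : ℕ) (h : Continuous (Nval a 0 r)) :
    Continuous (Nstar a 0 r) := by
  have h1 : Continuous fun t : ℝ => Real.exp (-t) :=
    Real.continuous_exp.comp continuous_neg
  have h2 : Continuous fun t : ℝ => ∫ x in (0:ℝ)..t, Nval a 0 r x * Real.exp x :=
    intervalIntegral.continuous_primitive
      (fun c d => ((h.mul Real.continuous_exp).intervalIntegrable c d)) 0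
  exact h1.mul h2

lemma Nval_cont (a : ℕ → ℝ) : ∀ m, Continuous (Nval a 0 m) := by
  intro m
  induction m using Nat.strong_induction_on with
  | _ m ih =>
    match m with
    | 0 =>
      have : Nval a 0 0 = fun _ => (0:ℝ) := funext (nval_zero a 0)
      rw [this]; exact continuous_const
    | n + 1 =>
      have : Nval a 0 (n+1) = fun t => (Finset.Icc 1 (n+1)).sup' (icc_ne n)
          (fun j => Nalloc a 0 (n+1) j t) := funext (nval_succ a 0 n)
      rw [this]
      apply cont_sup'
      intro j hj
      simp only [Finset.mem_Icc] at hj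
      have hr : Continuous (Nstar a 0 (n+1-j)) :=
        Nstar_cont a _ (ih (n+1-j) (by omega))
      exact (continuous_const.add (continuous_const.mul hr) :
        Continuous (fun t => a j + (a j * (1 - 0) + 0) * Nstar a 0 (n + 1 - j) t))

lemma w_cont (a : ℕ → ℝ) (r : ℕ) : Continuous (w a r) :=
  continuous_const.add (Nstar_cont a r (Nval_cont a r))

lemma V_cont (a : ℕ → ℝ) (m : ℕ) : Continuous (V a m) :=
  continuous_const.add (Nval_cont a m)

lemma w_hasDeriv (a : ℕ → ℝ) (r : ℕ) (t : ℝ) :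
    HasDerivAt (w a r) (V a r t - w a r t) t := by
  have hc : Continuous fun x => Nval a 0 r x * Real.exp x :=
    (Nval_cont a r).mul Real.continuous_exp
  have hI : HasDerivAt (fun s => ∫ x in (0:ℝ)..s, Nval a 0 r x * Real.exp x)
      (Nval a 0 r t * Real.exp t) t :=
    intervalIntegral.integral_hasDerivAt_right (hc.intervalIntegrable 0 t)
      (hc.stronglyMeasurableAtFilter _ _) hc.continuousAt
  have he : HasDerivAt (fun s : ℝ => Real.exp (-s)) (-Real.exp (-t)) t := by
    have h := (hasDerivAt_neg t).exp
    rw [mul_neg_one] at h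
    exact h
  have := (he.mul hI)
  have h2 : HasDerivAt (w a r)
      (-Real.exp (-t) * (∫ x in (0:ℝ)..t, Nval a 0 r x * Real.exp x)
        + Real.exp (-t) * (Nval a 0 r t * Real.exp t)) t := by
    have h3 := (hasDerivAt_const t (1:ℝ)).add this
    rw [zero_add] at h3
    exact h3
  convert h2 using 1
  have : Real.exp (-t) * (Nval a 0 r t * Real.exp t) = Nval a 0 r t := by
    rw [← mul_assoc, mul_comm (Real.exp (-t)), mul_assoc, ← Real.exp_add]
    simp
  rw [this, V, w, Nstar]; ring

section Pos
variable (ha : ∀ j, 0 ≤ a j)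

lemma Nstar_nonneg (r : ℕ) (t : ℝ) (h : ∀ x, 0 ≤ x → 0 ≤ Nval a 0 r x)
    (ht : 0 ≤ t) : 0 ≤ Nstar a 0 r t := by
  apply mul_nonneg (Real.exp_nonneg _)
  apply intervalIntegral.integral_nonneg ht
  intro x hx
  exact mul_nonneg (h x hx.1) (Real.exp_nonneg _)

include ha in
lemma Nval_nonneg : ∀ m t, 0 ≤ t → 0 ≤ Nval a 0 m t := by
  intro m
  induction m using Nat.strong_induction_on with
  | _ m ih =>
    match m with
    | 0 => intro t _; rw [nval_zero]
    | n + 1 =>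
      intro t ht
      rw [nval_succ, ]
      have h1 : (1:ℕ) ∈ Finset.Icc 1 (n+1) := by simp
      refine le_trans ?_ (Finset.le_sup' _ h1)
      rw [nalloc_frail]
      apply mul_nonneg (ha 1)
      have := Nstar_nonneg (a := a) (n+1-1) t (fun x hx => ih _ (by omega) x hx) ht
      rw [w]; linarith

include ha in
lemma w_ge_one (r : ℕ) (t : ℝ) (ht : 0 ≤ t) : 1 ≤ w a r t := by
  have := Nstar_nonneg (a := a) r t (fun x hx => Nval_nonneg ha r x hx) ht
  rw [w]; linarith

include ha in
lemma V_ge_one (m : ℕ) (t : ℝ) (ht : 0 ≤ t) : 1 ≤ V a m t := by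
  have := Nval_nonneg ha m t ht
  rw [V]; linarith

include ha in
lemma w_le_V (r : ℕ) (hm : MonotoneOn (V a r) (Set.Ici 0)) (t : ℝ) (ht : 0 ≤ t) :
    w a r t ≤ V a r t := by
  have hNmono : ∀ x ∈ Set.Icc (0:ℝ) t, Nval a 0 r x * Real.exp x
      ≤ Nval a 0 r t * Real.exp x := by
    intro x hx
    have : V a r x ≤ V a r t := hm hx.1 ht hx.2
    have : Nval a 0 r x ≤ Nval a 0 r t := by simpa [V] using this
    exact mul_le_mul_of_nonneg_right this (Real.exp_nonneg _)
  have hc : Continuous fun x => Nval a 0 r x * Real.exp x :=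
    (Nval_cont a r).mul Real.continuous_exp
  have hint : Nstar a 0 r t ≤ Nval a 0 r t * (1 - Real.exp (-t)) := by
    rw [Nstar]
    have h2 : (∫ x in (0:ℝ)..t, Nval a 0 r x * Real.exp x)
        ≤ ∫ x in (0:ℝ)..t, Nval a 0 r t * Real.exp x :=
      intervalIntegral.integral_mono_on ht (hc.intervalIntegrable 0 t)
        ((continuous_const.mul Real.continuous_exp).intervalIntegrable 0 t) hNmono
    have h3 : (∫ x in (0:ℝ)..t, Nval a 0 r t * Real.exp x)
        = Nval a 0 r t * (Real.exp t - 1) := by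
      rw [intervalIntegral.integral_const_mul, integral_exp]; simp
    calc Real.exp (-t) * ∫ x in (0:ℝ)..t, Nval a 0 r x * Real.exp x
        ≤ Real.exp (-t) * (Nval a 0 r t * (Real.exp t - 1)) := by
          rw [← h3]; exact mul_le_mul_of_nonneg_left h2 (Real.exp_nonneg _)
      _ = Nval a 0 r t * (1 - Real.exp (-t)) := by
          rw [Real.exp_neg]; field_simp
  have hN0 : 0 ≤ Nval a 0 r t := Nval_nonneg ha r t ht
  have he : Real.exp (-t) ≤ 1 := Real.exp_le_one_iff.mpr (by linarith)
  have he0 : 0 ≤ Real.exp (-t) := Real.exp_nonneg _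
  rw [w, V]
  nlinarith [mul_nonneg hN0 he0]

include ha in
lemma w_mono (r : ℕ) (hm : MonotoneOn (V a r) (Set.Ici 0)) :
    MonotoneOn (w a r) (Set.Ici 0) := by
  apply monotoneOn_of_deriv_nonneg (convex_Ici 0) (w_cont a r).continuousOn
  · intro x _
    exact ((w_hasDeriv a r x).differentiableAt).differentiableWithinAt
  · intro x hx
    rw [interior_Ici] at hx
    rw [(w_hasDeriv a r x).deriv]
    have := w_le_V ha r hm x (le_of_lt hx)
    linarith

include ha in
lemma V_mono : ∀ m, MonotoneOn (V a m) (Set.Ici 0) := by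
  intro m
  induction m using Nat.strong_induction_on with
  | _ m ih =>
    match m with
    | 0 =>
      intro s _ t _ _
      rw [V_zero, V_zero]
    | n + 1 =>
      intro s hs t ht hst
      rw [V_succ, V_succ]
      have : ∀ j ∈ Finset.Icc 1 (n+1), a j * w a (n+1-j) s ≤ a j * w a (n+1-j) t := by
        intro j hj
        simp only [Finset.mem_Icc] at hj
        exact mul_le_mul_of_nonneg_left
          (w_mono ha (n+1-j) (ih _ (by omega)) hs ht hst) (ha j)
      linarith [Finset.sup'_mono_fun (hs := icc_ne n) this]

include ha in
lemma w_le_V' (r : ℕ) (t : ℝ) (ht : 0 ≤ t) : w a r t ≤ V a r t :=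
  w_le_V ha r (V_mono ha r) t ht

include ha in
lemma w_mono' (r : ℕ) : MonotoneOn (w a r) (Set.Ici 0) :=
  w_mono ha r (V_mono ha r)

include ha in
lemma w_le_succ (r : ℕ) (t : ℝ) (ht : 0 ≤ t)
    (h : ∀ x, 0 ≤ x → V a r x ≤ V a (r+1) x) : w a r t ≤ w a (r+1) t := by
  rw [w, w, Nstar, Nstar]
  have hmono : ∀ x ∈ Set.Icc (0:ℝ) t, Nval a 0 r x * Real.exp x
      ≤ Nval a 0 (r+1) x * Real.exp x := by
    intro x hx
    have := h x hx.1
    have : Nval a 0 r x ≤ Nval a 0 (r+1) x := by simpa [V] using this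
    exact mul_le_mul_of_nonneg_right this (Real.exp_nonneg _)
  have : (∫ x in (0:ℝ)..t, Nval a 0 r x * Real.exp x)
      ≤ ∫ x in (0:ℝ)..t, Nval a 0 (r+1) x * Real.exp x := intervalIntegral.integral_mono_on (μ := volume) ht
    (((Nval_cont a r).mul Real.continuous_exp).intervalIntegrable 0 t)
    (((Nval_cont a (r+1)).mul Real.continuous_exp).intervalIntegrable 0 t) hmono
  have he0 : 0 ≤ Real.exp (-t) := Real.exp_nonneg _
  nlinarith

include ha in
lemma V_le_succ : ∀ m t, 0 ≤ t → V a m t ≤ V a (m+1) t := by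
  intro m
  induction m using Nat.strong_induction_on with
  | _ m ih =>
    match m with
    | 0 =>
      intro t ht
      rw [V_zero, V_succ]
      have h1 : (1:ℕ) ∈ Finset.Icc 1 (0+1) := by simp
      have : a 1 * w a (0+1-1) t ≤ (Finset.Icc 1 (0+1)).sup' (icc_ne 0)
          (fun j => a j * w a (0+1-j) t) :=
        Finset.le_sup' (f := fun j => a j * w a (0+1-j) t) h1
      have hw : 1 ≤ w a 0 t := w_ge_one ha 0 t ht
      have := mul_nonneg (ha 1) (le_trans zero_le_one hw)
      simp only [Nat.add_sub_cancel] at *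
      linarith
    | n + 1 =>
      intro t ht
      rw [V_succ, V_succ]
      have key : (Finset.Icc 1 (n+1)).sup' (icc_ne n) (fun j => a j * w a (n+1-j) t)
          ≤ (Finset.Icc 1 (n+2)).sup' (icc_ne (n+1)) (fun j => a j * w a (n+2-j) t) := by
        apply Finset.sup'_le
        intro j hj
        simp only [Finset.mem_Icc] at hj
        have h1 : a j * w a (n+1-j) t ≤ a j * w a (n+2-j) t := by
          apply mul_le_mul_of_nonneg_left _ (ha j)
          have hrw : n + 2 - j = (n + 1 - j) + 1 := by omega
          rw [hrw]
          exact w_le_succ ha (n+1-j) t ht (fun x hx => ih (n+1-j) (by omega) x hx)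
        refine le_trans h1 (Finset.le_sup' (f := fun j => a j * w a (n+2-j) t) ?_)
        simp only [Finset.mem_Icc]; omega
      linarith
end Pos
lemma mono_of_right_local (F : ℝ → ℝ) (hc : ContinuousOn F (Set.Ici 0))
    (hloc : ∀ t, 0 ≤ t → ∀ ε : ℝ, 0 < ε → ∀ᶠ t' in 𝓝[>] t, F t ≤ F t' + ε*(t' - t)) :
    MonotoneOn F (Set.Ici 0) := by
  intro x hx y hy hxy
  rcases eq_or_lt_of_le hxy with rfl | hlt
  · exact le_refl _
  have key : ∀ ε : ℝ, 0 < ε → F x ≤ F y + ε * (y - x) := by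
    intro ε hε
    set S := {z : ℝ | z ∈ Set.Icc x y ∧ F x ≤ F z + ε*(z - x)} with hS
    have hxS : x ∈ S := ⟨⟨le_refl x, le_of_lt hlt⟩, by simp⟩
    have hbdd : BddAbove S := ⟨y, fun z hz => hz.1.2⟩
    set c := sSup S with hc'
    have hcc : c ∈ closure S := csSup_mem_closure ⟨x, hxS⟩ hbdd
    have hSIcc : S ⊆ Set.Icc x y := fun z hz => hz.1
    have hcIcc : c ∈ Set.Icc x y := isClosed_Icc.closure_subset (closure_mono hSIcc hcc)
    have hcIci : c ∈ Set.Ici (0:ℝ) := le_trans (le_trans hx hcIcc.1) (le_refl c)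
    -- F x ≤ F c + ε (c - x)
    have hGc : F x ≤ F c + ε * (c - x) := by
      set G := fun z => F z + ε*(z - x) - F x with hG
      have hGcont : ContinuousWithinAt G S c := by
        have h1 : ContinuousWithinAt F (Set.Ici 0) c := hc c hcIci
        have h2 : ContinuousWithinAt G (Set.Ici 0) c := by
          exact (h1.add ((continuous_const.mul (continuous_id.sub continuous_const))).continuousWithinAt).sub
            continuousWithinAt_const
        exact h2.mono (fun z hz => le_trans hx (hSIcc hz).1)
      have hne : (𝓝[S] c).NeBot := mem_closure_iff_nhdsWithin_neBot.mp hcc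
      have hev : ∀ᶠ z in 𝓝[S] c, 0 ≤ G z := by
        filter_upwards [self_mem_nhdsWithin] with z hz
        have := hz.2
        simp only [hG]; linarith
      have : (0:ℝ) ≤ G c := ge_of_tendsto hGcont.tendsto hev
      simp only [hG] at this; linarith
    rcases eq_or_lt_of_le hcIcc.2 with hceq | hclt
    · rw [← hceq]; exact hGc
    · -- c < y, use local property to push past c
      exfalso
      have h1 := hloc c hcIci ε hε
      have h2 : Set.Ioo c y ∈ 𝓝[>] c := Ioo_mem_nhdsGT_of_mem ⟨le_refl c, hclt⟩
      have : ∃ t', (F c ≤ F t' + ε*(t' - c)) ∧ t' ∈ Set.Ioo c y :=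
        (h1.and (Filter.eventually_of_mem h2 (fun z hz => hz))).exists
      obtain ⟨t', ht'1, ht'2⟩ := this
      have ht'S : t' ∈ S := by
        refine ⟨⟨le_trans hcIcc.1 (le_of_lt ht'2.1), le_of_lt ht'2.2⟩, ?_⟩
        have : F x ≤ F c + ε * (c - x) := hGc
        nlinarith [ht'2.1]
      have : t' ≤ c := le_csSup hbdd ht'S
      exact absurd this (not_le.mpr ht'2.1)
  by_contra hcon
  push_neg at hcon
  have hyx : 0 < y - x := by linarith
  have := key ((F x - F y)/(2*(y-x))) (by apply div_pos (by linarith) (by linarith))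
  have heq : (y - x) * ((F x - F y) / (2 * (y - x))) = (F x - F y)/2 := by
    field_simp
  rw [mul_comm] at this
  rw [heq] at this
  linarith

section Arith
variable (haI : ∀ j, a j ∈ Set.Icc (0:ℝ) 1) (ha0 : a 0 = 0)
  (hmono : StrictMono a)
  (hconc : ∀ j : ℕ, a (j + 2) - a (j + 1) < a (j + 1) - a j)

include haI hmono ha0 in
lemma ha_pos (j : ℕ) (hj : 1 ≤ j) : 0 < a j := by
  have h1 : a 0 < a 1 := hmono (by omega)
  have h2 : a 1 ≤ a j := hmono.monotone hj
  rw [ha0] at h1; linarith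

include haI hconc in
lemma step2 (r : ℕ) : a r * a (r+2) ≤ a (r+1)^2 := by
  have h1 := hconc r
  have h2 := (haI r).1
  have h3 := (haI (r+2)).1
  have h4 := (haI (r+1)).1
  nlinarith [sq_nonneg (a r - a (r+2))]

include haI ha0 hmono hconc in
lemma logconc (k : ℕ) (hk : 1 ≤ k) : ∀ d, a (k+1+d) * a k ≤ a (k+d) * a (k+1) := by
  intro d
  induction d with
  | zero => simp [mul_comm]
  | succ d ih =>
    have h1 := step2 haI hconc (k+d)
    have hpos1 : 0 < a (k+d) := ha_pos haI ha0 hmono (k+d) (by omega)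
    have hpos2 : 0 < a (k+d+1) := ha_pos haI ha0 hmono (k+d+1) (by omega)
    have hk0 : 0 ≤ a k := (haI k).1
    have goal' : a (k+d+2) * a k * a (k+d) ≤ a (k+d+1) * a (k+1) * a (k+d) := by
      have e1 : a (k+d+2) * a k * a (k+d) = (a (k+d) * a (k+d+2)) * a k := by ring
      have e2 : (a (k+d) * a (k+d+2)) * a k ≤ a (k+d+1)^2 * a k :=
        mul_le_mul_of_nonneg_right h1 hk0
      have e3 : a (k+d+1)^2 * a k = a (k+d+1) * (a (k+1+d) * a k) := by rw [show k+1+d = k+d+1 by omega]; ring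
      have e4 : a (k+d+1) * (a (k+1+d) * a k) ≤ a (k+d+1) * (a (k+d) * a (k+1)) :=
        mul_le_mul_of_nonneg_left ih (le_of_lt hpos2)
      calc a (k+d+2) * a k * a (k+d) = (a (k+d) * a (k+d+2)) * a k := e1
        _ ≤ a (k+d+1)^2 * a k := e2
        _ = a (k+d+1) * (a (k+1+d) * a k) := e3
        _ ≤ a (k+d+1) * (a (k+d) * a (k+1)) := e4
        _ = a (k+d+1) * a (k+1) * a (k+d) := by ring
    have hmul : a (k+1+(d+1)) * a k * a (k+d) ≤ a (k+(d+1)) * a (k+1) * a (k+d) := by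
      calc a (k+1+(d+1)) * a k * a (k+d) = a (k+d+2) * a k * a (k+d) := by rw [show k+1+(d+1) = k+d+2 by omega]
        _ ≤ a (k+d+1) * a (k+1) * a (k+d) := goal'
        _ = a (k+(d+1)) * a (k+1) * a (k+d) := by rw [show k+(d+1) = k+d+1 by omega]
    exact le_of_mul_le_mul_right hmul hpos1
end Arith

section Main
variable (haI : ∀ j, a j ∈ Set.Icc (0:ℝ) 1) (ha0 : a 0 = 0)
  (hmono : StrictMono a)
  (hconc : ∀ j : ℕ, a (j + 2) - a (j + 1) < a (j + 1) - a j)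

omit ha0 hmono hconc in
include haI in
lemma w_mono_idx (r s : ℕ) (hrs : r ≤ s) (t : ℝ) (ht : 0 ≤ t) :
    w a r t ≤ w a s t := by
  have ha : ∀ j, 0 ≤ a j := fun j => (haI j).1
  have : ∀ m, w a m t ≤ w a (m+1) t := fun m =>
    w_le_succ ha m t ht (fun x hx => V_le_succ ha m x hx)
  exact monotone_nat_of_le_succ this hrs

include haI ha0 hmono hconc in
lemma argchoice (n k : ℕ) (hk1 : 1 ≤ k) (hkn : k ≤ n) (t : ℝ) (ht : 0 ≤ t)
    (hopt : ∀ i ∈ Finset.Icc 1 n, a i * w a (n-i) t ≤ a k * w a (n-k) t) :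
    ∃ j, 1 ≤ j ∧ j ≤ n+1 ∧ j ≤ k+1 ∧
      ∀ i ∈ Finset.Icc 1 (n+1), a i * w a (n+1-i) t ≤ a j * w a (n+1-j) t := by
  have ha : ∀ j, 0 ≤ a j := fun j => (haI j).1
  have hne : (Finset.Icc 1 (k+1)).Nonempty := Finset.nonempty_Icc.mpr (by omega)
  obtain ⟨j, hj, hjeq⟩ := Finset.exists_mem_eq_sup' hne (fun i => a i * w a (n+1-i) t)
  simp only [Finset.mem_Icc] at hj
  refine ⟨j, hj.1, by omega, hj.2, ?_⟩
  intro i hi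
  simp only [Finset.mem_Icc] at hi
  rcases le_or_gt i (k+1) with hik | hik
  · have : a i * w a (n+1-i) t ≤ (Finset.Icc 1 (k+1)).sup' hne (fun i => a i * w a (n+1-i) t) :=
      Finset.le_sup' (f := fun i => a i * w a (n+1-i) t) (Finset.mem_Icc.mpr ⟨hi.1, hik⟩)
    rw [hjeq] at this; exact this
  · -- i ≥ k+2 : use log-concavity
    obtain ⟨d, rfl⟩ : ∃ d, i = k+2+d := ⟨i - (k+2), by omega⟩
    have hlc := logconc haI ha0 hmono hconc k hk1 (d+1)
    have hlc' : a (k+2+d) * a k ≤ a (k+1+d) * a (k+1) := by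
      rw [show k+1+(d+1) = k+2+d by omega, show k+(d+1) = k+1+d by omega] at hlc
      exact hlc
    have hoptm := hopt (k+1+d) (Finset.mem_Icc.mpr ⟨by omega, by omega⟩)
    have hkpos : 0 < a k := ha_pos haI ha0 hmono k hk1
    have hwpos : 0 ≤ w a (n+1-(k+2+d)) t :=
      le_trans zero_le_one (w_ge_one ha _ t ht)
    have hidx : n + 1 - (k+2+d) = n - (k+1+d) := by omega
    -- a_i * w(n+1-i) * a_k ≤ a(k+1)*a(k+1+d)*w(n-(k+1+d)) ≤ a(k+1)*a_k*w(n-k)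
    have key : a (k+2+d) * w a (n+1-(k+2+d)) t * a k ≤ a (k+1) * w a (n-k) t * a k := by
      calc a (k+2+d) * w a (n+1-(k+2+d)) t * a k
          = (a (k+2+d) * a k) * w a (n+1-(k+2+d)) t := by ring
        _ ≤ (a (k+1+d) * a (k+1)) * w a (n+1-(k+2+d)) t :=
            mul_le_mul_of_nonneg_right hlc' hwpos
        _ = a (k+1) * (a (k+1+d) * w a (n-(k+1+d)) t) := by rw [hidx]; ring
        _ ≤ a (k+1) * (a k * w a (n-k) t) :=
            mul_le_mul_of_nonneg_left hoptm (ha (k+1))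
        _ = a (k+1) * w a (n-k) t * a k := by ring
    have h2 : a (k+2+d) * w a (n+1-(k+2+d)) t ≤ a (k+1) * w a (n-k) t :=
      le_of_mul_le_mul_right key hkpos
    have h3 : a (k+1) * w a (n-k) t ≤ a j * w a (n+1-j) t := by
      have m1 : (k+1) ∈ Finset.Icc 1 (k+1) := Finset.mem_Icc.mpr ⟨by omega, le_refl _⟩
      have : a (k+1) * w a (n+1-(k+1)) t ≤ (Finset.Icc 1 (k+1)).sup' hne (fun i => a i * w a (n+1-i) t) :=
        Finset.le_sup' (f := fun i => a i * w a (n+1-i) t) m1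
      rw [hjeq, show n+1-(k+1) = n-k by omega] at this
      exact this
    exact le_trans h2 h3

omit ha0 hmono hconc in
include haI in
lemma pointwise_ineq (j k p q : ℕ) (t : ℝ) (ht : 0 ≤ t) (hqp : q ≤ p)
    (hDpair : V a q t * w a p t ≤ V a p t * w a q t)
    (hAB : a k * w a q t ≤ a j * w a p t) :
    a k * (V a q t - w a q t) * (1 + a j * w a p t)
      ≤ a j * (V a p t - w a p t) * (1 + a k * w a q t) := by
  have ha : ∀ i, 0 ≤ a i := fun i => (haI i).1
  have hwq : 1 ≤ w a q t := w_ge_one ha q t ht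
  have hwp : 1 ≤ w a p t := w_ge_one ha p t ht
  have hwq0 : (0:ℝ) < w a q t := by linarith
  have hwp0 : (0:ℝ) < w a p t := by linarith
  have hVq : w a q t ≤ V a q t := w_le_V' ha q t ht
  have hVp : w a p t ≤ V a p t := w_le_V' ha p t ht
  set A := a j * w a p t with hA
  set B := a k * w a q t with hB
  set r := (V a q t - w a q t) / w a q t with hr
  set s := (V a p t - w a p t) / w a p t with hs
  have hBr : B * r = a k * (V a q t - w a q t) := by
    rw [hB, hr]; field_simp
  have hAs : A * s = a j * (V a p t - w a p t) := by
    rw [hA, hs]; field_simp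
  have hr0 : 0 ≤ r := div_nonneg (by linarith) (le_of_lt hwq0)
  have hrs : r ≤ s := by
    rw [hr, hs, div_le_div_iff₀ hwq0 hwp0]
    nlinarith
  have hB0 : 0 ≤ B := mul_nonneg (ha k) (by linarith)
  have hA0 : 0 ≤ A := mul_nonneg (ha j) (by linarith)
  rw [← hBr, ← hAs]
  calc B * r * (1 + A) ≤ A * r * (1 + B) := by nlinarith [mul_nonneg hr0 (sub_nonneg.mpr hAB)]
    _ ≤ A * s * (1 + B) := by nlinarith [mul_nonneg (mul_nonneg hA0 (sub_nonneg.mpr hrs)) (by linarith : (0:ℝ) ≤ 1 + B)]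

omit ha0 hmono hconc in
include haI in
lemma ratio_w_mono (p q : ℕ) (hqp : q ≤ p)
    (hD : ∀ t, 0 ≤ t → V a q t * w a p t ≤ V a p t * w a q t) :
    ∀ s t : ℝ, 0 ≤ s → s ≤ t → w a p s * w a q t ≤ w a p t * w a q s := by
  have ha : ∀ i, 0 ≤ a i := fun i => (haI i).1
  have hmonoF : MonotoneOn (fun t => w a p t / w a q t) (Set.Ici 0) := by
    apply monotoneOn_of_deriv_nonneg (convex_Ici 0)
    · apply ContinuousOn.div (w_cont a p).continuousOn (w_cont a q).continuousOn
      intro x hx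
      have := w_ge_one ha q x hx
      linarith
    · intro x hx
      rw [interior_Ici] at hx
      have hne : w a q x ≠ 0 := by
        have := w_ge_one ha q x (le_of_lt hx); linarith
      exact (((w_hasDeriv a p x).div (w_hasDeriv a q x) hne)).differentiableAt.differentiableWithinAt
    · intro x hx
      rw [interior_Ici] at hx
      have hx0 : (0:ℝ) ≤ x := le_of_lt hx
      have hwq : 1 ≤ w a q x := w_ge_one ha q x hx0
      have hne : w a q x ≠ 0 := by linarith
      have hd : HasDerivAt (fun t => w a p t / w a q t) _ x :=
        (w_hasDeriv a p x).div (w_hasDeriv a q x) hne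
      rw [hd.deriv]
      apply div_nonneg _ (sq_nonneg _)
      have := hD x hx0
      nlinarith
  intro s t hs hst
  have ht : (0:ℝ) ≤ t := le_trans hs hst
  have := hmonoF hs ht hst
  simp only at this
  rw [div_le_div_iff₀ (by linarith [w_ge_one ha q s hs] : (0:ℝ) < w a q s)
    (by linarith [w_ge_one ha q t ht] : (0:ℝ) < w a q t)] at this
  linarith
end Main

section Main2
variable (haI : ∀ j, a j ∈ Set.Icc (0:ℝ) 1) (ha0 : a 0 = 0)
  (hmono : StrictMono a)
  (hconc : ∀ j : ℕ, a (j + 2) - a (j + 1) < a (j + 1) - a j)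

include haI ha0 hmono hconc in
lemma Jratio (m : ℕ)
    (hDpair : ∀ q p, q ≤ p → p ≤ m+1 → ∀ t, 0 ≤ t →
      V a q t * w a p t ≤ V a p t * w a q t) :
    MonotoneOn (fun t => V a (m+2) t / V a (m+1) t) (Set.Ici 0) := by
  have ha : ∀ i, 0 ≤ a i := fun i => (haI i).1
  set F : ℝ → ℝ := fun t => V a (m+2) t / V a (m+1) t with hF
  apply mono_of_right_local F
  · apply ContinuousOn.div (V_cont a (m+2)).continuousOn (V_cont a (m+1)).continuousOn
    intro x hx
    have := V_ge_one ha (m+1) x hx; linarith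
  · intro t ht ε hε
    by_contra hcon
    rw [Filter.not_eventually] at hcon
    have hbad : ∃ᶠ t' in 𝓝[>] t, F t' + ε*(t' - t) < F t :=
      hcon.mono (fun t' h => not_le.mp h)
    -- attach an attaining index at each bad t'
    have hfreq2 : ∃ᶠ t' in 𝓝[>] t, ∃ k ∈ Finset.Icc 1 (m+1),
        (V a (m+1) t' = 1 + a k * w a (m+1-k) t') ∧ (F t' + ε*(t' - t) < F t) := by
      refine hbad.mono (fun t' h => ?_)
      obtain ⟨k, hk, hkeq⟩ := Finset.exists_mem_eq_sup' (icc_ne m)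
        (fun i => a i * w a (m+1-i) t')
      exact ⟨k, hk, by rw [V_succ, hkeq], h⟩
    -- pigeonhole a single k
    have hpig : ∃ k ∈ Finset.Icc 1 (m+1), ∃ᶠ t' in 𝓝[>] t,
        (V a (m+1) t' = 1 + a k * w a (m+1-k) t') ∧ (F t' + ε*(t' - t) < F t) := by
      by_contra hno
      push_neg at hno
      have hev : ∀ᶠ t' in 𝓝[>] t, ∀ k ∈ Finset.Icc 1 (m+1),
          ¬((V a (m+1) t' = 1 + a k * w a (m+1-k) t') ∧ (F t' + ε*(t' - t) < F t)) :=
        (Filter.eventually_all_finset _).mpr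
          (fun k hk => Filter.not_frequently.mp (by
            intro hf
            exact absurd hf (by simpa using hno k hk)))
      obtain ⟨t', ⟨k, hk, h1⟩, h2⟩ := (hfreq2.and_eventually hev).exists
      exact h2 k hk h1
    obtain ⟨k, hkmem, hfreq⟩ := hpig
    simp only [Finset.mem_Icc] at hkmem
    -- k attains at t itself
    have heqt : V a (m+1) t = 1 + a k * w a (m+1-k) t := by
      by_contra hnet
      have hg : ContinuousAt (fun s => V a (m+1) s - (1 + a k * w a (m+1-k) s)) t :=
        ((V_cont a (m+1)).sub (continuous_const.add
          (continuous_const.mul (w_cont a (m+1-k))))).continuousAt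
      have hne' : (fun s => V a (m+1) s - (1 + a k * w a (m+1-k) s)) t ≠ 0 :=
        sub_ne_zero.mpr hnet
      have hev := (hg.eventually_ne hne').filter_mono (nhdsWithin_le_nhds (s := Set.Ioi t))
      obtain ⟨t', h1, h2⟩ := (hfreq.and_eventually hev).exists
      exact h2 (sub_eq_zero.mpr h1.1)
    -- optimality of k at t on level m+1
    have hopt : ∀ i ∈ Finset.Icc 1 (m+1), a i * w a (m+1-i) t ≤ a k * w a (m+1-k) t := by
      intro i hi
      have h1 : a i * w a (m+1-i) t ≤ (Finset.Icc 1 (m+1)).sup' (icc_ne m)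
          (fun i => a i * w a (m+1-i) t) :=
        Finset.le_sup' (f := fun i => a i * w a (m+1-i) t) hi
      have h2 := V_succ a m t
      rw [heqt] at h2
      linarith
    obtain ⟨j, hj1, hjle, hjk, hjopt⟩ :=
      argchoice haI ha0 hmono hconc (m+1) k hkmem.1 hkmem.2 t ht hopt
    set p := m+2-j with hp
    set q := m+1-k with hq
    have hqp : q ≤ p := by omega
    have hpn : p ≤ m+1 := by omega
    have hA : a k * w a q t ≤ a j * w a p t := by
      have h1 := hjopt k (Finset.mem_Icc.mpr ⟨hkmem.1, by omega⟩)
      have h2 : w a q t ≤ w a (m+2-k) t := w_mono_idx haI q (m+2-k) (by omega) t ht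
      have h3 := mul_le_mul_of_nonneg_left h2 (ha k)
      exact le_trans h3 h1
    have hder := pointwise_ineq haI j k p q t ht hqp (hDpair q p hqp hpn t ht) hA
    set Fj : ℝ → ℝ := fun s => 1 + a j * w a p s with hFjdef
    set Gk : ℝ → ℝ := fun s => 1 + a k * w a q s with hGkdef
    have hFj' : HasDerivAt Fj (a j * (V a p t - w a p t)) t := by
      have h3 := (hasDerivAt_const t (1:ℝ)).add ((w_hasDeriv a p t).const_mul (a j))
      rw [zero_add] at h3
      exact h3
    have hGk' : HasDerivAt Gk (a k * (V a q t - w a q t)) t := by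
      have h3 := (hasDerivAt_const t (1:ℝ)).add ((w_hasDeriv a q t).const_mul (a k))
      rw [zero_add] at h3
      exact h3
    have hGkt : Gk t = V a (m+1) t := heqt.symm
    have hGkpos : (0:ℝ) < Gk t := by
      rw [hGkt]; linarith [V_ge_one ha (m+1) t ht]
    set c := (a j * (V a p t - w a p t) * Gk t - Fj t * (a k * (V a q t - w a q t))) / (Gk t)^2 with hcdef
    have hquot : HasDerivAt (fun s => Fj s / Gk s) c t := hFj'.div hGk' (ne_of_gt hGkpos)
    have hc0 : 0 ≤ c := by
      apply div_nonneg _ (sq_nonneg _)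
      have e1 : Fj t = 1 + a j * w a p t := rfl
      have e2 : Gk t = 1 + a k * w a q t := rfl
      rw [e1, e2]
      nlinarith [hder]
    -- V (m+2) t = Fj t
    have hFjt : Fj t = V a (m+2) t := by
      have h1 := V_succ a (m+1) t
      have h2 : (Finset.Icc 1 (m+2)).sup' (icc_ne (m+1)) (fun i => a i * w a (m+2-i) t)
          = a j * w a p t := by
        apply le_antisymm
        · exact Finset.sup'_le _ _ hjopt
        · exact Finset.le_sup' (f := fun i => a i * w a (m+2-i) t)
            (Finset.mem_Icc.mpr ⟨hj1, hjle⟩)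
      rw [h1, h2]
    have hFt : F t = Fj t / Gk t := by
      rw [hF, hFjt, hGkt]
    -- slope convergence
    have hslope : Tendsto (slope (fun s => Fj s / Gk s) t) (𝓝[>] t) (𝓝 c) :=
      (hasDerivAt_iff_tendsto_slope.mp hquot).mono_left
        (nhdsWithin_mono t (fun s hs => ne_of_gt hs))
    have hev1 : ∀ᶠ t' in 𝓝[>] t, c - ε < slope (fun s => Fj s / Gk s) t t' :=
      hslope.eventually (lt_mem_nhds (by linarith))
    have hev2 : ∀ᶠ t' in 𝓝[>] t, t < t' :=
      eventually_mem_nhdsWithin.mono (fun t' ht' => ht')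
    obtain ⟨t', ⟨hatt, hbad'⟩, hsl, htt'⟩ := (hfreq.and_eventually (hev1.and hev2)).exists
    -- derive contradiction
    have ht'0 : (0:ℝ) ≤ t' := le_trans ht (le_of_lt htt')
    have hGkt' : Gk t' = V a (m+1) t' := hatt.symm
    have hGkt'pos : (0:ℝ) < Gk t' := by
      rw [hGkt']; linarith [V_ge_one ha (m+1) t' ht'0]
    have hFjle : Fj t' ≤ V a (m+2) t' := by
      have h1 := V_succ a (m+1) t'
      have h2 : a j * w a p t' ≤ (Finset.Icc 1 (m+2)).sup' (icc_ne (m+1))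
          (fun i => a i * w a (m+2-i) t') :=
        Finset.le_sup' (f := fun i => a i * w a (m+2-i) t')
          (Finset.mem_Icc.mpr ⟨hj1, hjle⟩)
      rw [h1]
      show 1 + a j * w a p t' ≤ _
      linarith
    have hft'leF : Fj t' / Gk t' ≤ F t' := by
      have hFt' : F t' = V a (m+2) t' / V a (m+1) t' := rfl
      rw [hFt', ← hGkt']
      exact (div_le_div_iff_of_pos_right hGkt'pos).mpr hFjle
    -- slope inequality
    rw [slope_def_field] at hsl
    have hd : (0:ℝ) < t' - t := by linarith
    have hkey : Fj t / Gk t < Fj t' / Gk t' + ε * (t' - t) := by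
      have h1 : (c - ε) * (t' - t) < Fj t' / Gk t' - Fj t / Gk t :=
        (lt_div_iff₀ hd).mp hsl
      nlinarith [mul_nonneg hc0 (le_of_lt hd)]
    rw [← hFt] at hkey
    have : F t < F t := by
      calc F t < Fj t' / Gk t' + ε * (t' - t) := hkey
        _ ≤ F t' + ε * (t' - t) := by linarith [hft'leF]
        _ < F t := hbad'
    exact lt_irrefl _ this


include haI in
lemma w_zero_eq (t : ℝ) : w a 0 t = 1 := by
  have : ∀ x : ℝ, Nval a 0 0 x * Real.exp x = 0 := by
    intro x; rw [nval_zero]; ring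
  simp [w, Nstar, intervalIntegral.integral_congr (fun x _ => this x)]

include haI ha0 hmono hconc in
theorem Dstep : ∀ n, ∀ t : ℝ, 0 ≤ t →
    V a n t * w a (n+1) t ≤ V a (n+1) t * w a n t := by
  have ha : ∀ i, 0 ≤ a i := fun i => (haI i).1
  intro n
  induction n using Nat.strong_induction_on with
  | _ n ih =>
    match n with
    | 0 =>
      intro t ht
      rw [V_zero, w_zero_eq haI]
      simpa using w_le_V' ha 1 t ht
    | m + 1 =>
      have hDpair : ∀ q p, q ≤ p → p ≤ m+1 → ∀ t, 0 ≤ t →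
          V a q t * w a p t ≤ V a p t * w a q t := by
        intro q p hqp hpm
        have H : ∀ p, q ≤ p → p ≤ m+1 → ∀ t, 0 ≤ t →
            V a q t * w a p t ≤ V a p t * w a q t := by
          refine Nat.le_induction ?_ ?_
          · intro _ t _; exact le_of_eq rfl
          · intro p hqp' ihp hpm1 t ht
            have h1 := ihp (by omega) t ht
            have h2 := ih p (by omega) t ht
            have hwp : (0:ℝ) < w a p t := by linarith [w_ge_one ha p t ht]
            have hwq : (0:ℝ) ≤ w a q t := by linarith [w_ge_one ha q t ht]
            have hwp1 : (0:ℝ) ≤ w a (p+1) t := by linarith [w_ge_one ha (p+1) t ht]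
            have key : V a q t * w a (p+1) t * w a p t
                ≤ V a (p+1) t * w a q t * w a p t := by
              calc V a q t * w a (p+1) t * w a p t
                  = (V a q t * w a p t) * w a (p+1) t := by ring
                _ ≤ (V a p t * w a q t) * w a (p+1) t :=
                    mul_le_mul_of_nonneg_right h1 hwp1
                _ = (V a p t * w a (p+1) t) * w a q t := by ring
                _ ≤ (V a (p+1) t * w a p t) * w a q t :=
                    mul_le_mul_of_nonneg_right h2 hwq
                _ = V a (p+1) t * w a q t * w a p t := by ring
            exact le_of_mul_le_mul_right key hwp
        exact H p hqp hpm
      have hJ := Jratio haI ha0 hmono hconc m hDpair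
      intro t ht
      have hcross : ∀ x, 0 ≤ x → x ≤ t →
          V a (m+2) x * V a (m+1) t ≤ V a (m+2) t * V a (m+1) x := by
        intro x hx hxt
        have h1 := hJ (Set.mem_Ici.mpr hx) (Set.mem_Ici.mpr ht) hxt
        simp only at h1
        rw [div_le_div_iff₀ (by linarith [V_ge_one ha (m+1) x hx])
          (by linarith [V_ge_one ha (m+1) t ht])] at h1
        linarith
      set V1 := V a (m+1) t with hV1
      set V2 := V a (m+2) t with hV2
      have hV12 : V1 ≤ V2 := V_le_succ ha (m+1) t ht
      have hc1 : Continuous fun x => Nval a 0 (m+1) x * Real.exp x :=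
        (Nval_cont a (m+1)).mul Real.continuous_exp
      have hc2 : Continuous fun x => Nval a 0 (m+2) x * Real.exp x :=
        (Nval_cont a (m+2)).mul Real.continuous_exp
      have hcomb : Continuous fun x => V1 * (Nval a 0 (m+2) x * Real.exp x)
          - V2 * (Nval a 0 (m+1) x * Real.exp x) :=
        (continuous_const.mul hc2).sub (continuous_const.mul hc1)
      have hpoint : ∀ x ∈ Set.Icc (0:ℝ) t,
          V1 * (Nval a 0 (m+2) x * Real.exp x) - V2 * (Nval a 0 (m+1) x * Real.exp x)
            ≤ (V2 - V1) * Real.exp x := by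
        intro x hx
        have h1 := hcross x hx.1 hx.2
        have hscalar : V1 * Nval a 0 (m+2) x - V2 * Nval a 0 (m+1) x ≤ V2 - V1 := by
          have e1 : Nval a 0 (m+2) x = V a (m+2) x - 1 := by rw [V]; ring
          have e2 : Nval a 0 (m+1) x = V a (m+1) x - 1 := by rw [V]; ring
          rw [e1, e2]; nlinarith [h1]
        have := mul_le_mul_of_nonneg_right hscalar (Real.exp_nonneg x)
        calc V1 * (Nval a 0 (m+2) x * Real.exp x) - V2 * (Nval a 0 (m+1) x * Real.exp x)
            = (V1 * Nval a 0 (m+2) x - V2 * Nval a 0 (m+1) x) * Real.exp x := by ring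
          _ ≤ (V2 - V1) * Real.exp x := this
      have hInt : (∫ x in (0:ℝ)..t, (V1 * (Nval a 0 (m+2) x * Real.exp x)
            - V2 * (Nval a 0 (m+1) x * Real.exp x)))
          ≤ (V2 - V1) * (Real.exp t - 1) := by
        have h2 : (∫ x in (0:ℝ)..t, (V2 - V1) * Real.exp x)
            = (V2 - V1) * (Real.exp t - 1) := by
          rw [intervalIntegral.integral_const_mul, integral_exp]; simp
        rw [← h2]
        exact intervalIntegral.integral_mono_on (μ := volume) ht
          (hcomb.intervalIntegrable 0 t)
          ((continuous_const.mul Real.continuous_exp).intervalIntegrable 0 t) hpoint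
      have hlin : (∫ x in (0:ℝ)..t, (V1 * (Nval a 0 (m+2) x * Real.exp x)
            - V2 * (Nval a 0 (m+1) x * Real.exp x)))
          = V1 * (∫ x in (0:ℝ)..t, Nval a 0 (m+2) x * Real.exp x)
            - V2 * (∫ x in (0:ℝ)..t, Nval a 0 (m+1) x * Real.exp x) := by
        rw [intervalIntegral.integral_sub (show
            IntervalIntegrable (fun x => V1 * (Nval a 0 (m+2) x * Real.exp x)) volume 0 t from
            (continuous_const.mul hc2).intervalIntegrable 0 t)
          (show IntervalIntegrable (fun x => V2 * (Nval a 0 (m+1) x * Real.exp x)) volume 0 t from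
            (continuous_const.mul hc1).intervalIntegrable 0 t),
          intervalIntegral.integral_const_mul, intervalIntegral.integral_const_mul]
      have hstar : V1 * Nstar a 0 (m+2) t - V2 * Nstar a 0 (m+1) t ≤ V2 - V1 := by
        have he0 : (0:ℝ) ≤ Real.exp (-t) := Real.exp_nonneg _
        have he1 : Real.exp (-t) ≤ 1 := Real.exp_le_one_iff.mpr (by linarith)
        have step1 : V1 * Nstar a 0 (m+2) t - V2 * Nstar a 0 (m+1) t
            = Real.exp (-t) * (V1 * (∫ x in (0:ℝ)..t, Nval a 0 (m+2) x * Real.exp x)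
              - V2 * (∫ x in (0:ℝ)..t, Nval a 0 (m+1) x * Real.exp x)) := by
          rw [Nstar, Nstar]; ring
        rw [step1, ← hlin]
        have step2 : Real.exp (-t) * (∫ x in (0:ℝ)..t, (V1 * (Nval a 0 (m+2) x * Real.exp x)
              - V2 * (Nval a 0 (m+1) x * Real.exp x)))
            ≤ Real.exp (-t) * ((V2 - V1) * (Real.exp t - 1)) :=
          mul_le_mul_of_nonneg_left hInt he0
        have step3 : Real.exp (-t) * ((V2 - V1) * (Real.exp t - 1))
            = (V2 - V1) * (1 - Real.exp (-t)) := by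
          rw [Real.exp_neg]
          have : Real.exp t ≠ 0 := Real.exp_ne_zero t
          field_simp
        rw [step3] at step2
        nlinarith [mul_nonneg (sub_nonneg.mpr hV12) he0]
      show V1 * w a (m+2) t ≤ V2 * w a (m+1) t
      rw [w, w]
      nlinarith [hstar]
include haI ha0 hmono hconc in
lemma Dpair_all (q p : ℕ) (hqp : q ≤ p) :
    ∀ t : ℝ, 0 ≤ t → V a q t * w a p t ≤ V a p t * w a q t := by
  have ha : ∀ i, 0 ≤ a i := fun i => (haI i).1
  have H : ∀ p, q ≤ p → ∀ t : ℝ, 0 ≤ t →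
      V a q t * w a p t ≤ V a p t * w a q t := by
    refine Nat.le_induction ?_ ?_
    · intro t _; exact le_of_eq rfl
    · intro p hqp' ihp t ht
      have h1 := ihp t ht
      have h2 := Dstep haI ha0 hmono hconc p t ht
      have hwp : (0:ℝ) < w a p t := by linarith [w_ge_one ha p t ht]
      have hwq : (0:ℝ) ≤ w a q t := by linarith [w_ge_one ha q t ht]
      have hwp1 : (0:ℝ) ≤ w a (p+1) t := by linarith [w_ge_one ha (p+1) t ht]
      have key : V a q t * w a (p+1) t * w a p t
          ≤ V a (p+1) t * w a q t * w a p t := by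
        calc V a q t * w a (p+1) t * w a p t
            = (V a q t * w a p t) * w a (p+1) t := by ring
          _ ≤ (V a p t * w a q t) * w a (p+1) t :=
              mul_le_mul_of_nonneg_right h1 hwp1
          _ = (V a p t * w a (p+1) t) * w a q t := by ring
          _ ≤ (V a (p+1) t * w a p t) * w a q t :=
              mul_le_mul_of_nonneg_right h2 hwq
          _ = V a (p+1) t * w a q t * w a p t := by ring
      exact le_of_mul_le_mul_right key hwp
  exact H p hqp

include haI ha0 hmono hconc in
lemma persist (n j k : ℕ) (hjk : j ≤ k) (s t : ℝ) (hs : 0 ≤ s) (hst : s ≤ t)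
    (h : a k * w a (n-k) s ≤ a j * w a (n-j) s) :
    a k * w a (n-k) t ≤ a j * w a (n-j) t := by
  have ha : ∀ i, 0 ≤ a i := fun i => (haI i).1
  have ht : (0:ℝ) ≤ t := le_trans hs hst
  set p := n - j with hp
  set q := n - k with hq
  have hqp : q ≤ p := by omega
  have hr := ratio_w_mono haI p q hqp (Dpair_all haI ha0 hmono hconc q p hqp) s t hs hst
  have hwqs : (0:ℝ) < w a q s := by linarith [w_ge_one ha q s hs]
  have key : a k * w a q t * w a q s ≤ a j * w a p t * w a q s := by
    calc a k * w a q t * w a q s = (a k * w a q s) * w a q t := by ring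
      _ ≤ (a j * w a p s) * w a q t := by
          exact mul_le_mul_of_nonneg_right h (by linarith [w_ge_one ha q t ht])
      _ = a j * (w a p s * w a q t) := by ring
      _ ≤ a j * (w a p t * w a q s) := mul_le_mul_of_nonneg_left hr (ha j)
      _ = a j * w a p t * w a q s := by ring
  exact le_of_mul_le_mul_right key hwqs
end Main2

end Frail

open Frail in
/-- Theorem 5.1 ([A] for the Frail Fighter): for `u = 0` and every `n ≥ 1`,
`t ↦ K(n,t)` is non-increasing on `[0,∞)`. -/
theorem frail_A
    (a : ℕ → ℝ) (haI : ∀ j, a j ∈ Set.Icc (0:ℝ) 1) (ha0 : a 0 = 0)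
    (hmono : StrictMono a)
    (hconc : ∀ j : ℕ, a (j + 2) - a (j + 1) < a (j + 1) - a j) :
    ∀ n : ℕ, 1 ≤ n → AntitoneOn (fun t => Kopt a 0 n t) (Set.Ici (0:ℝ)) := by
  intro n hn
  obtain ⟨m, rfl⟩ : ∃ m, n = m + 1 := ⟨n - 1, by omega⟩
  intro t ht t' ht' htt'
  simp only [Set.mem_Ici] at ht ht'
  show Kopt a 0 (m+1) t' ≤ Kopt a 0 (m+1) t
  have hSne : ∀ s : ℝ, {i : ℕ | 1 ≤ i ∧ i ≤ m+1 ∧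
      Nalloc a 0 (m+1) i s = Nval a 0 (m+1) s}.Nonempty := by
    intro s
    obtain ⟨i, hi, hieq⟩ := Finset.exists_mem_eq_sup' (icc_ne m)
      (fun i => Nalloc a 0 (m+1) i s)
    simp only [Finset.mem_Icc] at hi
    exact ⟨i, hi.1, hi.2, by rw [nval_succ]; exact hieq.symm⟩
  have hKt := Nat.sInf_mem (hSne t)
  have hKt' := Nat.sInf_mem (hSne t')
  set K := Kopt a 0 (m+1) t with hK
  set K' := Kopt a 0 (m+1) t' with hK'
  have hKmem : 1 ≤ K ∧ K ≤ m+1 ∧ Nalloc a 0 (m+1) K t = Nval a 0 (m+1) t := hKt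
  have hK'mem : 1 ≤ K' ∧ K' ≤ m+1 ∧ Nalloc a 0 (m+1) K' t' = Nval a 0 (m+1) t' := hKt'
  by_contra hcon
  push_neg at hcon
  -- K < K'
  have hlt : K < K' := hcon
  -- at time t : Nalloc K' t ≤ Nval t = Nalloc K t
  have hle_t : Nalloc a 0 (m+1) K' t ≤ Nalloc a 0 (m+1) K t := by
    have h1 : Nalloc a 0 (m+1) K' t ≤ Nval a 0 (m+1) t := by
      rw [nval_succ]
      exact Finset.le_sup' (f := fun i => Nalloc a 0 (m+1) i t)
        (Finset.mem_Icc.mpr ⟨hK'mem.1, hK'mem.2.1⟩)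
    rw [← hKmem.2.2] at h1
    exact h1
  -- persistence
  have hle_t' : Nalloc a 0 (m+1) K' t' ≤ Nalloc a 0 (m+1) K t' := by
    rw [nalloc_frail, nalloc_frail] at hle_t ⊢
    exact persist haI ha0 hmono hconc (m+1) K K' (le_of_lt hlt) t t' ht htt' hle_t
  -- hence K attains the max at t'
  have hKt'eq : Nalloc a 0 (m+1) K t' = Nval a 0 (m+1) t' := by
    have h1 : Nalloc a 0 (m+1) K t' ≤ Nval a 0 (m+1) t' := by
      rw [nval_succ]
      exact Finset.le_sup' (f := fun i => Nalloc a 0 (m+1) i t')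
        (Finset.mem_Icc.mpr ⟨hKmem.1, hKmem.2.1⟩)
    have h2 : Nval a 0 (m+1) t' ≤ Nalloc a 0 (m+1) K t' := by
      rw [← hK'mem.2.2]
      exact hle_t'
    linarith
  have hmem : K ∈ {i : ℕ | 1 ≤ i ∧ i ≤ m+1 ∧
      Nalloc a 0 (m+1) i t' = Nval a 0 (m+1) t'} := ⟨hKmem.1, hKmem.2.1, hKt'eq⟩
  have : K' ≤ K := Nat.sInf_le hmem
  omega
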